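/- Let r be an odd positive integer and let m and n be positive integers. If m = a(n) + n + F_r, then φ^r·{mφ} − φ^(r−2)·{nφ} = 1, where F_r is the r-th Fibonacci number. -/
import Mathlib

noncomputable def φ : ℝ := (1 + Real.sqrt 5) / 2
noncomputable def a (n : ℕ) : ℤ := ⌊(n : ℝ) * φ⌋

lemma phi_sq : φ ^ 2 = φ + 1 := by
  have h5 : Real.sqrt 5 ^ 2 = 5 := Real.sq_sqrt (by norm_num)
  unfold φ; nlinarith [h5]

lemma phi_gt_one : 1 < φ := by
  have h5 : Real.sqrt 5 ^ 2 = 5 := Real.sq_sqrt (by norm_num)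
  have h0 : 0 ≤ Real.sqrt 5 := Real.sqrt_nonneg 5
  unfold φ; nlinarith

lemma phi_pow_fib (k : ℕ) : φ ^ (k+1) = Nat.fib (k+1) * φ + Nat.fib k := by
  induction k with
  | zero => simp
  | succ k ih =>
    rw [pow_succ, ih, Nat.fib_add_two]
    push_cast
    linear_combination (Nat.fib (k+1) : ℝ) * phi_sq

lemma psi_pow_fib (k : ℕ) : (1 - φ) ^ (k+1) = Nat.fib (k+1) * (1 - φ) + Nat.fib k := by
  induction k with
  | zero => simp
  | succ k ih =>
    rw [pow_succ, ih, Nat.fib_add_two]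
    push_cast
    linear_combination (Nat.fib (k+1) : ℝ) * phi_sq

theorem fib_shift_fract_identity (r : ℕ) (hr : Odd r) (hrpos : 0 < r)
    (m n : ℕ) (hm : 0 < m) (hn : 0 < n)
    (hmn : (m : ℤ) = a n + n + Nat.fib r) :
    φ ^ (r : ℤ) * Int.fract ((m : ℝ) * φ)
      - φ ^ ((r : ℤ) - 2) * Int.fract ((n : ℝ) * φ) = 1 := by
  obtain ⟨k, rfl⟩ : ∃ k, r = k + 1 := ⟨r - 1, by omega⟩
  set t := Int.fract ((n:ℝ) * φ) with ht
  have hφ2 := phi_sq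
  have hφ1 : 1 < φ := phi_gt_one
  have hφ0 : (0:ℝ) < φ := by linarith
  have hφne : φ ≠ 0 := ne_of_gt hφ0
  have hφlt2 : φ < 2 := by nlinarith
  have h1 : φ * (φ - 1) = 1 := by nlinarith
  have hinv : φ⁻¹ = φ - 1 := inv_eq_of_mul_eq_one_right h1
  have hinv2 : (φ^2)⁻¹ = 2 - φ := inv_eq_of_mul_eq_one_right (by nlinarith)
  have hA := phi_pow_fib k
  have hB := psi_pow_fib k
  have hC : (φ - 1) ^ (k+1) = Nat.fib (k+1) * φ - Nat.fib (k+1) - Nat.fib k := by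
    rw [show φ - 1 = -(1-φ) by ring, hr.neg_pow, hB]; ring
  have hPmul : φ ^ (k+1) * (φ-1)^(k+1) = 1 := by
    rw [← mul_pow, h1, one_pow]
  have hPinv : (φ ^ (k+1))⁻¹ = Nat.fib (k+1) * φ - Nat.fib (k+1) - Nat.fib k := by
    rw [← hC]; exact inv_eq_of_mul_eq_one_right hPmul
  have hPpos : 0 < φ ^ (k+1) := pow_pos hφ0 _
  have hPge : φ ≤ φ ^ (k+1) := le_self_pow₀ (le_of_lt hφ1) (by omega)
  have hPinvle : (φ ^ (k+1))⁻¹ ≤ φ - 1 := by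
    rw [← hinv]
    exact inv_anti₀ hφ0 hPge
  have ht0 : 0 ≤ t := Int.fract_nonneg _
  have ht1 : t < 1 := Int.fract_lt_one _
  have hy0 : 0 ≤ (φ ^ (k+1))⁻¹ + (φ^2)⁻¹ * t :=
    add_nonneg (le_of_lt (inv_pos.2 hPpos))
      (mul_nonneg (le_of_lt (inv_pos.2 (by positivity))) ht0)
  have hy1 : (φ ^ (k+1))⁻¹ + (φ^2)⁻¹ * t < 1 := by
    rw [hinv2]; nlinarith
  have hfl : ((⌊(n:ℝ)*φ⌋ : ℤ) : ℝ) = (n:ℝ)*φ - t := by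
    rw [ht]; exact (Int.self_sub_fract _).symm
  have hmR : (m:ℝ) = ((n:ℝ)*φ - t) + n + Nat.fib (k+1) := by
    have h2 : (m:ℝ) = ((a n : ℤ) : ℝ) + n + Nat.fib (k+1) := by exact_mod_cast hmn
    unfold a at h2
    rw [hfl] at h2
    exact h2
  have hdiff : (m:ℝ)*φ - ((φ ^ (k+1))⁻¹ + (φ^2)⁻¹ * t)
      = ((2*⌊(n:ℝ)*φ⌋ + n + Nat.fib (k+1) + Nat.fib k : ℤ) : ℝ) := by
    rw [hPinv, hinv2, hmR]
    push_cast
    rw [hfl]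
    linear_combination (n:ℝ) * hφ2
  have hfract : Int.fract ((m:ℝ)*φ) = (φ ^ (k+1))⁻¹ + (φ^2)⁻¹ * t := by
    have h := Int.fract_eq_fract.2 ⟨_, hdiff⟩
    rw [h, Int.fract_eq_self.2 ⟨hy0, hy1⟩]
  have hz2 : φ ^ (((k+1:ℕ)):ℤ) = φ ^ (k+1) := zpow_natCast φ (k+1)
  have hz3 : φ ^ ((((k+1:ℕ)):ℤ) - 2) = φ ^ (k+1) / φ ^ 2 := by
    rw [zpow_sub₀ hφne, hz2, show (2:ℤ) = ((2:ℕ):ℤ) from rfl, zpow_natCast]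
  rw [hfract, hz2, hz3]
  field_simp
  ring
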